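/- Let n ≥ 4 and let K be a conjugacy class of S_n with cycle lengths m_1 ≥ m_2 - m_1 ≥ ... (in the notation where a representative is (1⋯m_1)(m_1+1⋯m_2)⋯), having at least two non-trivial cycles (i.e., m_1 ≥ 2 and m_2 - m_1 ≥ 2). Let K' be the conjugacy class obtained by merging the two largest cycles into a single cycle of length m_2 (keeping all other cycles the same). Then |K'| ≥ |K|. -/

import Mathlib

/-- The full cycle type of a permutation of `Fin n`: the multiset of cycle lengths,
including a part `1` for each fixed point. -/
def fullCycleType {n : ℕ} (σ : Equiv.Perm (Fin n)) : Multiset ℕ :=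
  σ.cycleType + Multiset.replicate (n - σ.cycleType.sum) 1

/-- The conjugacy class of `S_n` consisting of the permutations with the
given (full) cycle type. -/
def classOf (n : ℕ) (m : Multiset ℕ) : Set (Equiv.Perm (Fin n)) :=
  {σ | fullCycleType σ = m}

open Equiv Equiv.Perm List Finset

section AuxStmt2

variable {α : Type*} [DecidableEq α] [Fintype α]


theorem mergeSwap (l1 l2 : List α) (h : (l1 ++ l2).Nodup)
    (h1 : 0 < l1.length) (h2 : 0 < l2.length) :
    Equiv.swap (l1[0]) (l2[0]) * (l1 ++ l2).formPerm = l1.formPerm * l2.formPerm := by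
  have hd : l1.Disjoint l2 := List.disjoint_of_nodup_append h
  have h1n : l1.Nodup := h.of_append_left
  have h2n : l2.Nodup := h.of_append_right
  have hL : (l1 ++ l2).length = l1.length + l2.length := List.length_append
  ext x
  by_cases hx : x ∈ l1 ++ l2
  · obtain ⟨i, hi, rfl⟩ := List.mem_iff_getElem.mp hx
    rw [Perm.mul_apply, Perm.mul_apply, formPerm_apply_getElem _ h i hi]
    by_cases hil : i < l1.length
    · have hg1 : (l1 ++ l2)[i] = l1[i] := List.getElem_append_left hil
      rw [hg1, formPerm_apply_of_notMem (fun hm => hd (getElem_mem hil) hm),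
        formPerm_apply_getElem _ h1n i hil]
      by_cases hsucc : i + 1 < l1.length
      · have e1 : (i + 1) % (l1 ++ l2).length = i + 1 := Nat.mod_eq_of_lt (by omega)
        have e2 : (i + 1) % l1.length = i + 1 := Nat.mod_eq_of_lt (by omega)
        simp only [e1, e2]
        have hg2 : (l1 ++ l2)[i+1]'(by omega) = l1[i+1] := List.getElem_append_left hsucc
        rw [hg2, swap_apply_of_ne_of_ne]
        · intro e
          have := h1n.getElem_inj_iff.mp (e : l1[i+1] = l1[0])
          omega
        · exact fun e => hd (getElem_mem hsucc) (e ▸ getElem_mem h2)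
      · have hieq : i + 1 = l1.length := by omega
        have e1 : (i + 1) % (l1 ++ l2).length = l1.length := by
          rw [hieq]; exact Nat.mod_eq_of_lt (by omega)
        have e2 : (i + 1) % l1.length = 0 := by rw [hieq, Nat.mod_self]
        simp only [e1, e2]
        have hg2 : (l1 ++ l2)[l1.length]'(by omega) = l2[0] := by
          rw [List.getElem_append_right (le_refl _)]; simp
        rw [hg2, swap_apply_right]
    · have hj : i - l1.length < l2.length := by omega
      have hg1 : (l1 ++ l2)[i] = l2[i - l1.length] := List.getElem_append_right (by omega)
      rw [hg1, formPerm_apply_getElem _ h2n _ hj,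
        formPerm_apply_of_notMem (fun hm => hd hm
          (getElem_mem (Nat.mod_lt _ h2 : (i - l1.length + 1) % l2.length < l2.length)))]
      by_cases hsucc : i + 1 < (l1 ++ l2).length
      · have e1 : (i + 1) % (l1 ++ l2).length = i + 1 := Nat.mod_eq_of_lt hsucc
        have e2 : (i - l1.length + 1) % l2.length = i + 1 - l1.length := by
          rw [Nat.mod_eq_of_lt (by omega)]; omega
        simp only [e1, e2]
        have hg2 : (l1 ++ l2)[i+1]'(by omega) = l2[i + 1 - l1.length]'(by omega) :=
          List.getElem_append_right (by omega)
        rw [hg2, swap_apply_of_ne_of_ne]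
        · exact fun e => hd (getElem_mem h1)
            ((e.symm : l1[0] = l2[i+1-l1.length]) ▸ getElem_mem (by omega))
        · intro e
          have := h2n.getElem_inj_iff.mp (e : l2[i+1-l1.length] = l2[0])
          omega
      · have e1 : (i + 1) % (l1 ++ l2).length = 0 := by
          have : i + 1 = (l1 ++ l2).length := by omega
          rw [this, Nat.mod_self]
        have e2 : (i - l1.length + 1) % l2.length = 0 := by
          have : i - l1.length + 1 = l2.length := by rw [hL] at hsucc; omega
          rw [this, Nat.mod_self]
        simp only [e1, e2]
        have hg2 : (l1 ++ l2)[0]'(by omega) = l1[0] := List.getElem_append_left h1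
        rw [hg2, swap_apply_left]
  · rw [Perm.mul_apply, Perm.mul_apply, formPerm_apply_of_notMem hx,
      formPerm_apply_of_notMem (fun hm => hx (List.mem_append_right _ hm)),
      formPerm_apply_of_notMem (fun hm => hx (List.mem_append_left _ hm)),
      swap_apply_of_ne_of_ne (fun e => hx (by rw [e]; exact List.mem_append_left _ (getElem_mem h1)))
        (fun e => hx (by rw [e]; exact List.mem_append_right _ (getElem_mem h2)))]

theorem cycleOf_mul_of_mem_support {γ δ : Equiv.Perm α} (hd : Equiv.Perm.Disjoint γ δ)
    (hγ : γ.IsCycle) {z : α} (hz : z ∈ γ.support) : (γ * δ).cycleOf z = γ := by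
  have hzd : δ z = z := Equiv.Perm.notMem_support.mp (hd.mem_imp hz)
  rw [Equiv.Perm.cycleOf_mul_of_apply_right_eq_self hd.commute z hzd]
  exact hγ.cycleOf_eq (by simpa using hz)

theorem cycleOf_mul_of_not_mem_support {γ δ : Equiv.Perm α} (hd : Equiv.Perm.Disjoint γ δ)
    {z : α} (hz : z ∉ γ.support) : (γ * δ).cycleOf z = δ.cycleOf z := by
  rw [hd.commute.eq]
  exact Equiv.Perm.cycleOf_mul_of_apply_right_eq_self hd.symm.commute z (by simpa using hz)

theorem support_eq_toList_toFinset (σ : Equiv.Perm α) {z : α} (hz : z ∈ σ.support) :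
    (σ.toList z).toFinset = (σ.cycleOf z).support := by
  ext y
  simp only [List.mem_toFinset, Equiv.Perm.mem_toList_iff, Equiv.Perm.mem_support_cycleOf_iff]

theorem cancel_cons_cycleType {a : ℕ} {r s : Multiset ℕ} (h : a ::ₘ r = s + {a}) : s = r := by
  have h2 : {a} + r = {a} + s := by rw [Multiset.singleton_add, h, add_comm]
  exact (add_left_cancel h2).symm

theorem splitCycleType {b c : ℕ} {r : Multiset ℕ} (hb : 2 ≤ b) (hc : 2 ≤ c)
    {σ' : Equiv.Perm α} {z : α} (hct : σ'.cycleType = (b + c) ::ₘ r)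
    (hlong : ((σ'.cycleOf z).support.card = b + c)) :
    (Equiv.swap z ((σ' ^ b) z) * σ').cycleType = b ::ₘ c ::ₘ r := by
  have hz : z ∈ σ'.support := by
    by_contra hzs
    rw [Equiv.Perm.cycleOf_eq_one_iff σ'
      |>.mpr (by simpa using hzs)] at hlong
    simp at hlong; omega
  set w := (σ' ^ b) z with hwdef
  set γ := σ'.cycleOf z with hγdef
  have hγmem : γ ∈ σ'.cycleFactorsFinset := Equiv.Perm.cycleOf_mem_cycleFactorsFinset_iff.mpr hz
  have hdisj : Equiv.Perm.Disjoint (σ' * γ⁻¹) γ :=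
    Equiv.Perm.disjoint_mul_inv_of_mem_cycleFactorsFinset hγmem
  set δ := σ' * γ⁻¹ with hδdef
  have hσ'eq : σ' = δ * γ := by rw [hδdef]; group
  have hγc : γ.IsCycle := Equiv.Perm.isCycle_cycleOf σ' (Equiv.Perm.mem_support.mp hz)
  have hδct : δ.cycleType = r := by
    apply cancel_cons_cycleType (a := b + c)
    rw [← hct]
    conv_lhs => rw [hσ'eq]
    rw [hdisj.cycleType_mul, hγc.cycleType, hlong]
  -- the list
  set l := σ'.toList z with hldef
  have hlen : l.length = b + c := by rw [hldef, Equiv.Perm.length_toList, hlong]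
  have hnd : l.Nodup := Equiv.Perm.nodup_toList σ' z
  have hform : l.formPerm = γ := Equiv.Perm.formPerm_toList σ' z
  have happ : l.take b ++ l.drop b = l := List.take_append_drop b l
  have hlen1 : (l.take b).length = b := by rw [List.length_take, hlen]; omega
  have hlen2 : (l.drop b).length = c := by rw [List.length_drop, hlen]; omega
  have h01 : 0 < (l.take b).length := by rw [hlen1]; omega
  have h02 : 0 < (l.drop b).length := by rw [hlen2]; omega
  have hl0 : l[0]'(by rw [hlen]; omega) = z := by
    have := Equiv.Perm.toList_getElem_zero σ' z hz
    simpa [List.get_eq_getElem] using this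
  have hlb : l[b]'(by rw [hlen]; omega) = w := by
    have := Equiv.Perm.getElem_toList σ' z b (by rw [← hldef, hlen]; omega)
    rw [hwdef]
    simpa [List.get_eq_getElem] using this
  have hl10 : (l.take b)[0]'h01 = z := by
    rw [List.getElem_take]
    exact hl0
  have hl20 : (l.drop b)[0]'h02 = w := by
    rw [List.getElem_drop]
    simpa using hlb
  have hndapp : (l.take b ++ l.drop b).Nodup := by rw [happ]; exact hnd
  have hmerge : Equiv.swap z w * γ = (l.take b).formPerm * (l.drop b).formPerm := by
    have hm := mergeSwap (l.take b) (l.drop b) hndapp h01 h02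
    rw [hl10, hl20, happ, hform] at hm
    exact hm
  -- disjointness facts
  have hzw : z ≠ w := by
    intro e
    have e2 : l[0]'(by rw [hlen]; omega) = l[b]'(by rw [hlen]; omega) := by
      rw [hl0, hlb]; exact e
    have := hnd.getElem_inj_iff.mp e2
    omega
  have hsupγδ : _root_.Disjoint γ.support δ.support := hdisj.symm.disjoint_support
  have hsupp1 : ((l.take b).formPerm).support ≤ γ.support := by
    refine le_trans (List.support_formPerm_le _) ?_
    refine le_trans ?_ (le_of_eq (support_eq_toList_toFinset σ' hz))
    exact fun x hx => List.mem_toFinset.mpr ((List.take_subset b l) (List.mem_toFinset.mp hx))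
  have hsupp2 : ((l.drop b).formPerm).support ≤ γ.support := by
    refine le_trans (List.support_formPerm_le _) ?_
    refine le_trans ?_ (le_of_eq (support_eq_toList_toFinset σ' hz))
    exact fun x hx => List.mem_toFinset.mpr ((List.drop_subset b l) (List.mem_toFinset.mp hx))
  have hswapsup : (Equiv.swap z w).support ≤ γ.support := by
    rw [Equiv.Perm.support_swap hzw]
    intro t ht
    simp only [Finset.mem_insert, Finset.mem_singleton] at ht
    rcases ht with rfl | rfl
    · exact Equiv.Perm.mem_support_cycleOf_iff.mpr ⟨Equiv.Perm.SameCycle.refl _ _, hz⟩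
    · exact Equiv.Perm.mem_support_cycleOf_iff.mpr ⟨⟨(b : ℤ), by rw [hwdef]; simp⟩, hz⟩
  have hcommδ : Commute (Equiv.swap z w) δ := by
    apply Equiv.Perm.Disjoint.commute
    rw [Equiv.Perm.disjoint_iff_disjoint_support]
    exact Finset.disjoint_of_subset_left hswapsup hsupγδ
  have key : Equiv.swap z w * σ' = δ * ((l.take b).formPerm * (l.drop b).formPerm) := by
    rw [hσ'eq, ← mul_assoc, hcommδ.eq, mul_assoc, hmerge]
  rw [key]
  -- cycleType computation
  have hd12 : Equiv.Perm.Disjoint ((l.take b).formPerm) ((l.drop b).formPerm) := by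
    apply (List.formPerm_disjoint_iff (hnd.sublist (List.take_sublist b l))
      (hnd.sublist (List.drop_sublist b l)) (by omega) (by omega)).mpr
    exact List.disjoint_of_nodup_append hndapp
  have hdδ1 : Equiv.Perm.Disjoint δ ((l.take b).formPerm) := by
    rw [Equiv.Perm.disjoint_iff_disjoint_support]
    exact Finset.disjoint_of_subset_right hsupp1 hsupγδ.symm
  have hdδ2 : Equiv.Perm.Disjoint δ ((l.drop b).formPerm) := by
    rw [Equiv.Perm.disjoint_iff_disjoint_support]
    exact Finset.disjoint_of_subset_right hsupp2 hsupγδ.symm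
  have hcyc1 : ((l.take b).formPerm).IsCycle :=
    List.isCycle_formPerm (hnd.sublist (List.take_sublist b l)) (by omega)
  have hcyc2 : ((l.drop b).formPerm).IsCycle :=
    List.isCycle_formPerm (hnd.sublist (List.drop_sublist b l)) (by omega)
  have hsc1 : ((l.take b).formPerm).support.card = b := by
    rw [List.support_formPerm_of_nodup _ (hnd.sublist (List.take_sublist b l))
      (fun x hx => by rw [hx] at hlen1; simp at hlen1; omega),
      List.toFinset_card_of_nodup (hnd.sublist (List.take_sublist b l)), hlen1]
  have hsc2 : ((l.drop b).formPerm).support.card = c := by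
    rw [List.support_formPerm_of_nodup _ (hnd.sublist (List.drop_sublist b l))
      (fun x hx => by rw [hx] at hlen2; simp at hlen2; omega),
      List.toFinset_card_of_nodup (hnd.sublist (List.drop_sublist b l)), hlen2]
  rw [(hdδ1.mul_right hdδ2).cycleType_mul, hd12.cycleType_mul, hδct, hcyc1.cycleType, hcyc2.cycleType,
    hsc1, hsc2]
  change r + ({b} + {c}) = _
  rw [← Multiset.singleton_add, ← Multiset.singleton_add, add_comm, add_assoc]

theorem countLong {b c : ℕ} {r : Multiset ℕ} (hb : 2 ≤ b) (hc : 2 ≤ c)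
    (hr : ∀ x ∈ r, x ≤ c) (σ' : Equiv.Perm α) (hct : σ'.cycleType = (b + c) ::ₘ r) :
    (Finset.univ.filter fun z : α => (σ'.cycleOf z).support.card = b + c).card = b + c := by
  have hmem : b + c ∈ σ'.cycleType := by rw [hct]; exact Multiset.mem_cons_self _ _
  obtain ⟨γ, δ, heq, hd, hγ, hcard⟩ := Equiv.Perm.mem_cycleType_iff.mp hmem
  have hδct : δ.cycleType = r := by
    apply cancel_cons_cycleType (a := b + c)
    rw [← hct, heq, hd.cycleType_mul, hγ.cycleType, hcard, add_comm]
  have hset : (Finset.univ.filter fun z : α => (σ'.cycleOf z).support.card = b + c)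
      = γ.support := by
    ext z
    simp only [Finset.mem_filter, Finset.mem_univ, true_and]
    constructor
    · intro hzc
      by_contra hzγ
      rw [heq, cycleOf_mul_of_not_mem_support hd hzγ] at hzc
      by_cases hzδ : δ z = z
      · rw [(Equiv.Perm.cycleOf_eq_one_iff δ).mpr hzδ] at hzc
        simp at hzc
        omega
      · have hmem2 : (δ.cycleOf z).support.card ∈ δ.cycleType := by
          have hf : δ.cycleOf z ∈ δ.cycleFactorsFinset :=
            Equiv.Perm.cycleOf_mem_cycleFactorsFinset_iff.mpr (Equiv.Perm.mem_support.mpr hzδ)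
          rw [Equiv.Perm.cycleType_def]
          exact Multiset.mem_map_of_mem _ hf
        rw [hδct] at hmem2
        have := hr _ hmem2
        omega
    · intro hzγ
      rw [heq, cycleOf_mul_of_mem_support hd hγ hzγ, hcard]
  rw [hset, hcard]

theorem fiberLower {b c : ℕ} {r : Multiset ℕ} (hb : 2 ≤ b) (hc : 2 ≤ c)
    {σ : Equiv.Perm α} (hσ : σ.cycleType = b ::ₘ c ::ₘ r) :
    b * c ≤ (Finset.univ.filter fun p : Equiv.Perm α × α =>
      (p.1.cycleType = (b + c) ::ₘ r ∧ (p.1.cycleOf p.2).support.card = b + c) ∧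
      Equiv.swap p.2 ((p.1 ^ b) p.2) * p.1 = σ).card := by
  have hmem1 : b ∈ σ.cycleType := by rw [hσ]; exact Multiset.mem_cons_self _ _
  obtain ⟨ζ1, τ, heq1, hd1, hζ1, hcard1⟩ := Equiv.Perm.mem_cycleType_iff.mp hmem1
  have hτct : τ.cycleType = c ::ₘ r := by
    have h2 : b ::ₘ (c ::ₘ r) = {b} + τ.cycleType := by
      rw [← hσ, heq1, hd1.cycleType_mul, hζ1.cycleType, hcard1]
    rw [Multiset.singleton_add] at h2
    exact ((Multiset.cons_inj_right b).mp h2).symm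
  have hmem2 : c ∈ τ.cycleType := by rw [hτct]; exact Multiset.mem_cons_self _ _
  obtain ⟨ζ2, δ, heq2, hd2, hζ2, hcard2⟩ := Equiv.Perm.mem_cycleType_iff.mp hmem2
  have hδct : δ.cycleType = r := by
    apply cancel_cons_cycleType (a := c)
    rw [← hτct, heq2, hd2.cycleType_mul, hζ2.cycleType, hcard2, add_comm]
  have hsupτ : τ.support = ζ2.support ∪ δ.support := by rw [heq2, hd2.support_mul]
  have hd12 : _root_.Disjoint ζ1.support ζ2.support :=
    Finset.disjoint_of_subset_right (hsupτ ▸ Finset.subset_union_left) hd1.disjoint_support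
  have hd1δ : _root_.Disjoint ζ1.support δ.support :=
    Finset.disjoint_of_subset_right (hsupτ ▸ Finset.subset_union_right) hd1.disjoint_support
  have hcardprod : (ζ1.support ×ˢ ζ2.support).card = b * c := by
    rw [Finset.card_product, hcard1, hcard2]
  rw [← hcardprod]
  apply Finset.card_le_card_of_injOn (fun p => (Equiv.swap p.1 p.2 * σ, p.1))
  · rintro ⟨x, y⟩ hp
    rw [Finset.mem_coe, Finset.mem_product] at hp
    obtain ⟨hx, hy⟩ := hp
    have hxy : x ≠ y := fun e => Finset.disjoint_left.mp hd12 hx (e ▸ hy)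
    set l1 := ζ1.toList x with hl1def
    set l2 := ζ2.toList y with hl2def
    have hcyc1x : ζ1.cycleOf x = ζ1 := hζ1.cycleOf_eq (Equiv.Perm.mem_support.mp hx)
    have hcyc2y : ζ2.cycleOf y = ζ2 := hζ2.cycleOf_eq (Equiv.Perm.mem_support.mp hy)
    have hlen1 : l1.length = b := by
      rw [hl1def, Equiv.Perm.length_toList, hcyc1x, hcard1]
    have hlen2 : l2.length = c := by
      rw [hl2def, Equiv.Perm.length_toList, hcyc2y, hcard2]
    have hnd1 : l1.Nodup := Equiv.Perm.nodup_toList _ _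
    have hnd2 : l2.Nodup := Equiv.Perm.nodup_toList _ _
    have htf1 : l1.toFinset = ζ1.support := by
      rw [hl1def, support_eq_toList_toFinset ζ1 hx, hcyc1x]
    have htf2 : l2.toFinset = ζ2.support := by
      rw [hl2def, support_eq_toList_toFinset ζ2 hy, hcyc2y]
    have hnd12 : (l1 ++ l2).Nodup := by
      rw [List.nodup_append]
      refine ⟨hnd1, hnd2, fun a ha1 a' ha2 e => ?_⟩
      exact Finset.disjoint_left.mp hd12 (htf1 ▸ List.mem_toFinset.mpr ha1)
        (htf2 ▸ List.mem_toFinset.mpr (e ▸ ha2))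
    have h01 : 0 < l1.length := by omega
    have h02 : 0 < l2.length := by omega
    have hl10 : l1[0]'h01 = x := by
      have := Equiv.Perm.toList_getElem_zero ζ1 x hx
      simpa [List.get_eq_getElem] using this
    have hl20 : l2[0]'h02 = y := by
      have := Equiv.Perm.toList_getElem_zero ζ2 y hy
      simpa [List.get_eq_getElem] using this
    have hform1 : l1.formPerm = ζ1 := by rw [hl1def, Equiv.Perm.formPerm_toList, hcyc1x]
    have hform2 : l2.formPerm = ζ2 := by rw [hl2def, Equiv.Perm.formPerm_toList, hcyc2y]
    have hm := mergeSwap l1 l2 hnd12 h01 h02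
    rw [hl10, hl20, hform1, hform2] at hm
    have hΓeq : (l1 ++ l2).formPerm = Equiv.swap x y * (ζ1 * ζ2) := by
      rw [← hm, ← mul_assoc, Equiv.swap_mul_self, one_mul]
    have hσ'Γ : Equiv.swap x y * σ = (l1 ++ l2).formPerm * δ := by
      rw [heq1, heq2, hΓeq, mul_assoc, mul_assoc]
    have hlenapp : (l1 ++ l2).length = b + c := by
      rw [List.length_append, hlen1, hlen2]
    have hΓc : (l1 ++ l2).formPerm.IsCycle :=
      List.isCycle_formPerm hnd12 (by omega)
    have hsuppΓ : (l1 ++ l2).formPerm.support = (l1 ++ l2).toFinset := by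
      apply List.support_formPerm_of_nodup _ hnd12
      intro a ha
      rw [ha] at hlenapp
      simp at hlenapp
      omega
    have hcardΓ : (l1 ++ l2).formPerm.support.card = b + c := by
      rw [hsuppΓ, List.toFinset_card_of_nodup hnd12, hlenapp]
    have hdΓδ : Equiv.Perm.Disjoint ((l1 ++ l2).formPerm) δ := by
      rw [Equiv.Perm.disjoint_iff_disjoint_support, hsuppΓ, List.toFinset_append, htf1, htf2]
      rw [Finset.disjoint_union_left]
      exact ⟨hd1δ, hd2.disjoint_support⟩
    have hxΓ : x ∈ (l1 ++ l2).formPerm.support := by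
      rw [hsuppΓ, List.toFinset_append, Finset.mem_union]
      exact Or.inl (htf1 ▸ hx)
    have hct' : (Equiv.swap x y * σ).cycleType = (b + c) ::ₘ r := by
      rw [hσ'Γ, hdΓδ.cycleType_mul, hΓc.cycleType, hcardΓ, hδct]
      rfl
    have hcycOf : ((Equiv.swap x y * σ).cycleOf x).support.card = b + c := by
      rw [hσ'Γ, cycleOf_mul_of_mem_support hdΓδ hΓc hxΓ, hcardΓ]
    have hpow : ((Equiv.swap x y * σ) ^ b) x = y := by
      rw [hσ'Γ, hdΓδ.commute.mul_pow, Equiv.Perm.mul_apply,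
        Equiv.Perm.pow_apply_eq_self_of_apply_eq_self
          (Equiv.Perm.notMem_support.mp (Finset.disjoint_left.mp hd1δ hx))]
      have hx0 : x = (l1 ++ l2)[0]'(by omega) := by
        rw [List.getElem_append_left h01]; exact hl10.symm
      have hfp := List.formPerm_pow_apply_getElem (l1 ++ l2) hnd12 b 0 (by omega)
      rw [hx0, hfp]
      have hidx : (0 + b) % (l1 ++ l2).length = b := by
        rw [hlenapp, Nat.zero_add]; exact Nat.mod_eq_of_lt (by omega)
      have h2' : (l1 ++ l2)[(0 + b) % (l1 ++ l2).length]'(Nat.mod_lt _ (by rw [hlenapp]; omega)) = y := by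
        simp only [hidx]
        rw [List.getElem_append_right hlen1.le]
        simp only [hlen1, Nat.sub_self]
        exact hl20
      exact h2'
    rw [Finset.mem_coe, Finset.mem_filter]
    refine ⟨Finset.mem_univ _, ⟨⟨hct', hcycOf⟩, ?_⟩⟩
    show Equiv.swap x (((Equiv.swap x y * σ) ^ b) x) * (Equiv.swap x y * σ) = σ
    rw [hpow, ← mul_assoc, Equiv.swap_mul_self, one_mul]
  · rintro ⟨x1, y1⟩ hp1 ⟨x2, y2⟩ hp2 he
    simp only [Finset.coe_product, Set.mem_prod, Finset.mem_coe] at hp1 hp2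
    obtain ⟨hx1, hy1⟩ := hp1
    obtain ⟨hx2, hy2⟩ := hp2
    simp only [Prod.mk.injEq] at he
    obtain ⟨hperm, hxx⟩ := he
    subst hxx
    have hsw : Equiv.swap x1 y1 = Equiv.swap x1 y2 := mul_right_cancel hperm
    have hy1x : y1 ≠ x1 := fun e => Finset.disjoint_left.mp hd12 (e ▸ hx1) hy1
    have happly := congrArg (fun π : Equiv.Perm α => π y1) hsw
    simp only [Equiv.swap_apply_right] at happly
    by_cases hyy : y1 = y2
    · rw [hyy]
    · rw [Equiv.swap_apply_of_ne_of_ne hy1x hyy] at happly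
      exact absurd happly.symm hy1x

theorem classCard_le {b c : ℕ} (r : Multiset ℕ) (hb : 2 ≤ b) (hc : 2 ≤ c)
    (hr : ∀ x ∈ r, x ≤ c) :
    (Finset.univ.filter fun σ : Equiv.Perm α => σ.cycleType = b ::ₘ c ::ₘ r).card ≤
      (Finset.univ.filter fun σ : Equiv.Perm α => σ.cycleType = (b + c) ::ₘ r).card := by
  set K := Finset.univ.filter fun σ : Equiv.Perm α => σ.cycleType = b ::ₘ c ::ₘ r with hK
  set K' := Finset.univ.filter fun σ : Equiv.Perm α => σ.cycleType = (b + c) ::ₘ r with hK'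
  set T : Finset (Equiv.Perm α × α) := Finset.univ.filter fun p =>
    p.1.cycleType = (b + c) ::ₘ r ∧ (p.1.cycleOf p.2).support.card = b + c with hT
  have hTcard : T.card = K'.card * (b + c) := by
    rw [Finset.card_eq_sum_card_fiberwise (f := Prod.fst) (t := K') (fun p hp => by
      rw [Finset.mem_coe, hT, Finset.mem_filter] at hp
      rw [Finset.mem_coe, hK', Finset.mem_filter]
      exact ⟨Finset.mem_univ _, hp.2.1⟩)]
    rw [Finset.sum_congr rfl (g := fun _ => b + c) (fun σ' hσ' => ?_), Finset.sum_const,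
      smul_eq_mul]
    have hσ'ct : σ'.cycleType = (b + c) ::ₘ r := by
      rw [hK', Finset.mem_filter] at hσ'
      exact hσ'.2
    rw [← countLong hb hc hr σ' hσ'ct]
    apply Finset.card_nbij (i := Prod.snd)
    · intro p hp
      simp only [hT, Finset.mem_coe, Finset.mem_filter, Finset.mem_univ, true_and] at hp ⊢
      rw [hp.2] at hp
      exact hp.1.2
    · rintro ⟨s1, z1⟩ hp1 ⟨s2, z2⟩ hp2 he
      simp only [Finset.coe_filter, Set.mem_setOf_eq] at hp1 hp2
      simp only at he
      rw [Prod.ext_iff]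
      exact ⟨hp1.2.trans hp2.2.symm, he⟩
    · intro z hz
      simp only [Finset.coe_filter, Finset.mem_univ, true_and, Set.mem_setOf_eq] at hz
      refine ⟨(σ', z), ?_, rfl⟩
      rw [Finset.mem_coe, Finset.mem_filter]
      refine ⟨?_, rfl⟩
      rw [hT, Finset.mem_filter]
      exact ⟨Finset.mem_univ _, hσ'ct, hz⟩
  have hTK : T.card = ∑ σ ∈ K, (T.filter fun p =>
      Equiv.swap p.2 ((p.1 ^ b) p.2) * p.1 = σ).card := by
    apply Finset.card_eq_sum_card_fiberwise
    intro p hp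
    rw [Finset.mem_coe, hT, Finset.mem_filter] at hp
    rw [Finset.mem_coe, hK, Finset.mem_filter]
    exact ⟨Finset.mem_univ _, splitCycleType hb hc hp.2.1 hp.2.2⟩
  have hlow : ∀ σ ∈ K, b + c ≤ (T.filter fun p =>
      Equiv.swap p.2 ((p.1 ^ b) p.2) * p.1 = σ).card := by
    intro σ hσ
    rw [hK, Finset.mem_filter] at hσ
    refine le_trans (Nat.add_le_mul hb hc) (le_trans (fiberLower hb hc hσ.2) (le_of_eq ?_))
    rw [hT, Finset.filter_filter]
  have : K.card * (b + c) ≤ T.card := by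
    rw [hTK]
    calc K.card * (b + c) = ∑ _σ ∈ K, (b + c) := by rw [Finset.sum_const, smul_eq_mul]
    _ ≤ _ := Finset.sum_le_sum hlow
  rw [hTcard] at this
  exact Nat.le_of_mul_le_mul_right this (by omega)

end AuxStmt2

theorem fullCycleType_eq_iff {n : ℕ} {σ : Equiv.Perm (Fin n)} {m : Multiset ℕ}
    (hm : m.sum = n) :
    fullCycleType σ = m ↔ σ.cycleType = m.filter (fun x => x ≠ 1) := by
  have hs : σ.cycleType.sum ≤ n := by
    rw [Equiv.Perm.sum_cycleType]
    simpa using (σ.support.card_le_univ)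
  constructor
  · rintro rfl
    rw [fullCycleType, Multiset.filter_add, Multiset.filter_eq_self.mpr
      (fun a ha => by have := Equiv.Perm.two_le_of_mem_cycleType ha; omega),
      Multiset.filter_eq_nil.mpr (fun a ha => by
        rw [Multiset.eq_of_mem_replicate ha]; simp), add_zero]
  · intro hct
    have key : m = m.filter (fun x => x ≠ 1) + Multiset.replicate (Multiset.count 1 m) 1 := by
      conv_lhs => rw [← Multiset.filter_add_not (fun x => x ≠ 1) m]
      congr 1
      rw [Multiset.filter_congr (fun x _ => by simp [eq_comm] :
        ∀ x ∈ m, (¬ x ≠ 1 ↔ 1 = x))]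
      exact Multiset.filter_eq m 1
    rw [fullCycleType, hct]
    have hsum2 : m.sum = (m.filter (fun x => x ≠ 1)).sum + Multiset.count 1 m := by
      conv_lhs => rw [key]
      simp [Multiset.sum_replicate]
    have hns : n - (m.filter (fun x => x ≠ 1)).sum = Multiset.count 1 m := by omega
    rw [hns]
    exact key.symm

theorem classOf_ncard {n : ℕ} {m : Multiset ℕ} (hm : m.sum = n) :
    Set.ncard (classOf n m) = (Finset.univ.filter fun σ : Equiv.Perm (Fin n) =>
      σ.cycleType = m.filter (fun x => x ≠ 1)).card := by
  have : classOf n m = ↑(Finset.univ.filter fun σ : Equiv.Perm (Fin n) =>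
      σ.cycleType = m.filter (fun x => x ≠ 1)) := by
    ext σ
    simp only [classOf, Set.mem_setOf_eq, Finset.coe_filter, Finset.mem_univ, true_and]
    exact fullCycleType_eq_iff hm
  rw [this, Set.ncard_coe_finset]

/-- Merging the two largest cycles of a conjugacy class of `S_n` (assuming both are
non-trivial, i.e. of length at least `2`) produces a conjugacy class that is at least
as large. Here the class `K` has cycle lengths `b ≥ c ≥ 2` together with the remaining
cycle lengths `rest` (all at most `c`), and `K'` replaces the cycles of lengths `b` and
`c` by a single cycle of length `b + c`. -/
theorem stmt_2 (n : ℕ) (hn : 4 ≤ n) (b c : ℕ) (rest : Multiset ℕ)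
    (hb : 2 ≤ b) (hc : 2 ≤ c) (hcb : c ≤ b)
    (hrest : ∀ x ∈ rest, 1 ≤ x ∧ x ≤ c)
    (hsum : b + c + rest.sum = n) :
    Set.ncard (classOf n (b ::ₘ c ::ₘ rest)) ≤ Set.ncard (classOf n ((b + c) ::ₘ rest)) := by
  have hsum1 : (b ::ₘ c ::ₘ rest).sum = n := by
    rw [Multiset.sum_cons, Multiset.sum_cons]; omega
  have hsum2 : ((b + c) ::ₘ rest).sum = n := by
    rw [Multiset.sum_cons]; omega
  rw [classOf_ncard hsum1, classOf_ncard hsum2]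
  have hf1 : (b ::ₘ c ::ₘ rest).filter (fun x => x ≠ 1)
      = b ::ₘ c ::ₘ rest.filter (fun x => x ≠ 1) := by
    rw [Multiset.filter_cons, Multiset.filter_cons,
      if_pos (show b ≠ 1 by omega), if_pos (show c ≠ 1 by omega),
      Multiset.singleton_add, Multiset.singleton_add]
  have hf2 : ((b + c) ::ₘ rest).filter (fun x => x ≠ 1)
      = (b + c) ::ₘ rest.filter (fun x => x ≠ 1) := by
    rw [Multiset.filter_cons, if_pos (show b + c ≠ 1 by omega), Multiset.singleton_add]
  rw [hf1, hf2]
  exact classCard_le (rest.filter (fun x => x ≠ 1)) hb hc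
    (fun x hx => (hrest x (Multiset.mem_of_mem_filter hx)).2)
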